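/- Fix j with 0 ≤ j ≤ n−1 such that t_j < t_{j+1}. Then the leading adjusted Bernstein–Bézier coefficients of the B-spline functions N_{p,j} over the knot span [t_j, t_{j+1}) satisfy b_{0,0}^{(j,j)} = 1 and, for every p with 1 ≤ p ≤ m, b_{p,p}^{(j,j)} = ((t_{j+1} − t_j)/(t_{j+p} − t_j))·b_{p−1,p−1}^{(j,j)}. -/

import Mathlib

/-- The B-spline basis functions `N_{p,i}` of degree `p` over the knot
sequence `t`, defined by the de Boor–Cox recursion, with the conventions that
a fraction with vanishing denominator is replaced by `0` (automatic for real
division in Lean) and that `N_{p,q} ≡ 0` whenever `q < -p` or `q ≥ n`. -/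
noncomputable def bspline (t : ℤ → ℝ) (n : ℕ) : ℕ → ℤ → ℝ → ℝ
  | 0 => fun i u =>
      if 0 ≤ i ∧ i < (n : ℤ) ∧ t i ≤ u ∧ u < t (i + 1) then 1 else 0
  | p + 1 => fun i u =>
      if -((p : ℤ) + 1) ≤ i ∧ i < (n : ℤ) then
        (u - t i) / (t ((p : ℤ) + 1 + i) - t i) * bspline t n p i u
          + (t ((p : ℤ) + 1 + i + 1) - u) / (t ((p : ℤ) + 1 + i + 1) - t (i + 1))
              * bspline t n p (i + 1) u
      else 0

/-- The `k`-th Bernstein basis polynomial of degree `p`. -/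
noncomputable def bern (p k : ℕ) (x : ℝ) : ℝ :=
  (p.choose k : ℝ) * x ^ k * (1 - x) ^ (p - k)

/-- the leading adjusted Bernstein–Bézier coefficients of the
B-spline functions `N_{p,j}` over a non-empty knot span `[t_j, t_{j+1})`
satisfy `b_{0,0}^{(j,j)} = 1` and
`b_{p,p}^{(j,j)} = ((t_{j+1} − t_j)/(t_{j+p} − t_j))·b_{p−1,p−1}^{(j,j)}`
for `1 ≤ p ≤ m`. Here `b p k` denotes `b_{p,k}^{(j,j)}`, characterized by the
Bernstein–Bézier representation of `N_{p,j}` on `[t_j, t_{j+1})`. -/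
theorem bspline_zero_aux (m n : ℕ) (t : ℤ → ℝ)
    (hmono : ∀ k l : ℤ, -(m : ℤ) ≤ k → k ≤ l → l ≤ (n : ℤ) + m → t k ≤ t l) :
    ∀ p : ℕ, ∀ i : ℤ, ∀ u : ℝ, 0 ≤ i → u < t i → bspline t n p i u = 0 := by
  intro p
  induction p with
  | zero =>
    intro i u hi hu
    simp only [bspline]
    rw [if_neg]
    rintro ⟨_, _, h, _⟩; linarith
  | succ q ih =>
    intro i u hi hu
    simp only [bspline]
    split
    · next h =>
      have hin : i < (n : ℤ) := h.2
      have ht : t i ≤ t (i + 1) := hmono i (i + 1) (by omega) (by omega) (by omega)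
      rw [ih i u hi hu, ih (i + 1) u (by omega) (by linarith)]
      ring
    · rfl

theorem sum_bern_one (c : ℕ → ℝ) (p : ℕ) :
    ∑ k ∈ Finset.range (p + 1), c k * bern p k 1 = c p := by
  rw [Finset.sum_eq_single p]
  · simp [bern]
  · intro k hk hkp
    have hklt : k < p := by
      have := Finset.mem_range.mp hk; omega
    simp [bern, Nat.sub_ne_zero_of_lt hklt]
  · intro h; exact absurd (Finset.self_mem_range_succ p) h

theorem bern_continuous (p k : ℕ) : Continuous (bern p k) := by
  unfold bern; continuity

theorem bspline_bezier_leading_coeff_init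
    (m n : ℕ) (hn : 1 ≤ n) (t : ℤ → ℝ)
    (hmono : ∀ k l : ℤ, -(m : ℤ) ≤ k → k ≤ l → l ≤ (n : ℤ) + m → t k ≤ t l)
    (h0n : t 0 < t n)
    (j : ℤ) (hj1 : 0 ≤ j) (hj2 : j ≤ (n : ℤ) - 1) (hspan : t j < t (j + 1))
    (b : ℕ → ℕ → ℝ)
    (hb : ∀ p : ℕ, p ≤ m → ∀ u ∈ Set.Ico (t j) (t (j + 1)),
      bspline t n p j u
        = ∑ k ∈ Finset.range (p + 1),
            b p k * bern p k ((u - t j) / (t (j + 1) - t j))) :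
    b 0 0 = 1
      ∧ ∀ p : ℕ, 1 ≤ p → p ≤ m →
          b p p = (t (j + 1) - t j) / (t (j + (p : ℤ)) - t j) * b (p - 1) (p - 1) := by
  have hd : (0:ℝ) < t (j + 1) - t j := by linarith
  have hjn : j < (n : ℤ) := by omega
  constructor
  · have h0 := hb 0 (Nat.zero_le m) (t j) ⟨le_refl _, hspan⟩
    simp only [bspline, bern] at h0
    rw [if_pos ⟨hj1, hjn, le_refl _, hspan⟩] at h0
    simp at h0
    linarith
  · intro p hp1 hpm
    obtain ⟨q, rfl⟩ : ∃ q, p = q + 1 := ⟨p - 1, (Nat.succ_pred_eq_of_pos hp1).symm⟩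
    simp only [Nat.add_sub_cancel]
    set α : ℝ := (t (j + 1) - t j) / (t ((q : ℤ) + 1 + j) - t j) with hα
    have hidx : j + ((q + 1 : ℕ) : ℤ) = (q : ℤ) + 1 + j := by push_cast; ring
    rw [hidx]
    set f : ℝ → ℝ := fun x => ∑ k ∈ Finset.range (q + 1 + 1), b (q + 1) k * bern (q + 1) k x with hf
    set g : ℝ → ℝ := fun x => x * α * ∑ k ∈ Finset.range (q + 1), b q k * bern q k x with hg
    have heq : Set.EqOn f g (Set.Ico (0:ℝ) 1) := by
      intro x hx
      obtain ⟨hx0, hx1⟩ := hx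
      set u : ℝ := t j + x * (t (j + 1) - t j) with hu
      have hu1 : t j ≤ u := by nlinarith
      have hu2 : u < t (j + 1) := by nlinarith
      have hxu : (u - t j) / (t (j + 1) - t j) = x := by
        rw [hu]; field_simp; ring
      have hrec : bspline t n (q + 1) j u
          = (u - t j) / (t ((q : ℤ) + 1 + j) - t j) * bspline t n q j u := by
        simp only [bspline]
        rw [if_pos ⟨by omega, hjn⟩,
          bspline_zero_aux m n t hmono q (j + 1) u (by omega) hu2]
        ring
      have h1 := hb (q + 1) hpm u ⟨hu1, hu2⟩
      have h2 := hb q (by omega) u ⟨hu1, hu2⟩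
      rw [hxu] at h1 h2
      have hud : u - t j = x * (t (j + 1) - t j) := by rw [hu]; ring
      calc f x = bspline t n (q + 1) j u := h1.symm
        _ = (u - t j) / (t ((q : ℤ) + 1 + j) - t j) * bspline t n q j u := hrec
        _ = g x := by rw [h2, hud, hg, hα, mul_div_assoc]
    have hfc : Continuous f := by
      apply continuous_finset_sum
      intro k _
      exact continuous_const.mul (bern_continuous _ _)
    have hgc : Continuous g := by
      apply Continuous.mul
      · exact continuous_id.mul continuous_const
      · apply continuous_finset_sum
        intro k _
        exact continuous_const.mul (bern_continuous _ _)
    have h1mem : (1:ℝ) ∈ closure (Set.Ico (0:ℝ) 1) := by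
      rw [closure_Ico (by norm_num : (0:ℝ) ≠ 1)]
      exact ⟨by norm_num, le_refl _⟩
    have hfg1 : f 1 = g 1 := heq.closure hfc hgc h1mem
    have hf1 : f 1 = b (q + 1) (q + 1) := sum_bern_one (b (q + 1)) (q + 1)
    have hg1 : g 1 = α * b q q := by
      rw [hg]; simp only [one_mul]
      rw [sum_bern_one (b q) q]
    rw [hf1, hg1] at hfg1
    exact hfg1
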